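/- For every k ∈ ℕ and every S' ⊆ S, the integer h(S') := ∑_{V' ⊆ V∖S} (−1)^{|V∖S| − |V'|} · β(V', S')^k equals the number of k-tuples (I₀, …, I_{k−1}) of independent sets in G contained in V∖S such that I₀ ∪ … ∪ I_{k−1} = V∖S and I_t ∩ N(s) ≠ ∅ for every s ∈ S' and every 0 ≤ t ≤ k−1. -/

import Mathlib

/-- `beta G S' V'` is `β(V', S')`: the number of independent sets `I ⊆ V'` of `G`
that intersect the neighborhood `N(s)` for every `s ∈ S'`. -/
def beta {V : Type*} [Fintype V] [DecidableEq V] (G : SimpleGraph V) [DecidableRel G.Adj]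
    (V' S' : Finset V) : ℕ :=
  (V'.powerset.filter fun I =>
    (∀ u ∈ I, ∀ v ∈ I, ¬ G.Adj u v) ∧ ∀ s ∈ S', I ∩ G.neighborFinset s ≠ ∅).card

lemma aux0 {V : Type*} [DecidableEq V] (A : Finset V) :
    ∑ X ∈ A.powerset, (-1:ℤ)^(A.card - X.card) = if A = ∅ then 1 else 0 := by
  have h : ∀ X ∈ A.powerset, (-1:ℤ)^(A.card - X.card) = (-1)^A.card * (-1)^X.card := by
    intro X hX
    rw [Finset.mem_powerset] at hX
    have hb := Finset.card_le_card hX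
    obtain ⟨a, ha⟩ : ∃ a, A.card = a + X.card := ⟨A.card - X.card, by omega⟩
    rw [ha, Nat.add_sub_cancel, pow_add, mul_assoc, ← pow_add, ← two_mul, pow_mul,
      neg_one_sq, one_pow, mul_one]
  rw [Finset.sum_congr rfl h, ← Finset.mul_sum, Finset.sum_powerset_neg_one_pow_card]
  by_cases hA : A = ∅
  · simp [hA]
  · simp [hA]

lemma aux_sum {V : Type*} [DecidableEq V] (W U : Finset V) (hU : U ⊆ W) :
    ∑ V' ∈ W.powerset.filter (fun V' => U ⊆ V'), (-1:ℤ)^(W.card - V'.card)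
      = if U = W then 1 else 0 := by
  have himg : W.powerset.filter (fun V' => U ⊆ V')
      = (W \ U).powerset.image (fun X => U ∪ X) := by
    ext V'
    simp only [Finset.mem_filter, Finset.mem_powerset, Finset.mem_image]
    constructor
    · rintro ⟨h1, h2⟩
      exact ⟨V' \ U, Finset.sdiff_subset_sdiff h1 (le_refl U),
        Finset.union_sdiff_of_subset h2⟩
    · rintro ⟨X, hX, rfl⟩
      exact ⟨Finset.union_subset hU (hX.trans Finset.sdiff_subset),
        Finset.subset_union_left⟩
  rw [himg, Finset.sum_image (by
    intro X hX Y hY hXY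
    rw [Finset.mem_coe, Finset.mem_powerset] at hX hY
    have dX : Disjoint U X := (Finset.disjoint_sdiff.mono_right hX)
    have dY : Disjoint U Y := (Finset.disjoint_sdiff.mono_right hY)
    replace hXY : U ∪ X = U ∪ Y := hXY
    rw [← Finset.union_sdiff_cancel_left dX, hXY, Finset.union_sdiff_cancel_left dY])]
  have hterm : ∀ X ∈ (W \ U).powerset,
      (-1:ℤ)^(W.card - (U ∪ X).card) = (-1:ℤ)^((W \ U).card - X.card) := by
    intro X hX
    rw [Finset.mem_powerset] at hX
    have dX : Disjoint U X := (Finset.disjoint_sdiff.mono_right hX)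
    rw [Finset.card_union_of_disjoint dX, Finset.card_sdiff_of_subset hU]
    congr 1
    have := Finset.card_le_card hU
    omega
  rw [Finset.sum_congr rfl hterm, aux0]
  congr 1
  simp only [Finset.sdiff_eq_empty_iff_subset, eq_iff_iff]
  exact ⟨fun h => le_antisymm hU h, fun h => h ▸ le_refl _⟩


/-- For every `S' ⊆ S`, the integer
`h(S') = ∑_{V' ⊆ V∖S} (−1)^{|V∖S|−|V'|} · β(V', S')^k`
equals the number of `k`-tuples `(I₀, …, I_{k−1})` of independent sets of `G`
contained in `V∖S` whose union is `V∖S` and with `I_t ∩ N(s) ≠ ∅` for every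
`s ∈ S'` and every `t`. -/
theorem h_counts_covers_meeting_neighborhoods
    {V : Type*} [Fintype V] [DecidableEq V] (G : SimpleGraph V) [DecidableRel G.Adj]
    (S : Finset V) (hS : ∀ u ∈ S, ∀ v ∈ S, ¬ G.Adj u v)
    (k : ℕ) (S' : Finset V) (hS' : S' ⊆ S) :
    (∑ V' ∈ (Finset.univ \ S).powerset,
        (-1 : ℤ) ^ ((Finset.univ \ S).card - V'.card) * (beta G V' S' : ℤ) ^ k)
      = Nat.card {f : Fin k → Finset V //
          (∀ t, ∀ u ∈ f t, ∀ v ∈ f t, ¬ G.Adj u v) ∧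
          (∀ t, f t ⊆ Finset.univ \ S) ∧
          Finset.univ.biUnion f = Finset.univ \ S ∧
          ∀ s ∈ S', ∀ t, f t ∩ G.neighborFinset s ≠ ∅} := by
  classical
  set W : Finset V := Finset.univ \ S with hWdef
  set Q : Finset V → Prop := fun I =>
    (∀ u ∈ I, ∀ v ∈ I, ¬ G.Adj u v) ∧ ∀ s ∈ S', I ∩ G.neighborFinset s ≠ ∅ with hQdef
  set T : Finset (Fin k → Finset V) :=
    Fintype.piFinset (fun _ : Fin k => W.powerset.filter Q) with hTdef
  -- Step 1: β(V')^k as a sum of indicators over T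
  have hbeta : ∀ V' ∈ W.powerset, (beta G V' S' : ℤ) ^ k
      = ∑ f ∈ T, if Finset.univ.biUnion f ⊆ V' then (1:ℤ) else 0 := by
    intro V' hV'
    rw [Finset.mem_powerset] at hV'
    have h1 : T.filter (fun f => Finset.univ.biUnion f ⊆ V')
        = Fintype.piFinset (fun _ : Fin k => V'.powerset.filter Q) := by
      ext f
      simp only [hTdef, Finset.mem_filter, Fintype.mem_piFinset, Finset.mem_powerset,
        Finset.biUnion_subset, Finset.mem_univ, forall_true_left, true_implies]
      constructor
      · rintro ⟨h2, h3⟩ t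
        exact ⟨h3 t, (h2 t).2⟩
      · intro h2
        exact ⟨fun t => ⟨(h2 t).1.trans hV', (h2 t).2⟩, fun t => (h2 t).1⟩
    rw [Finset.sum_boole, h1, Fintype.card_piFinset]
    simp [beta, hQdef]
  rw [Finset.sum_congr rfl (fun V' hV' => by rw [hbeta V' hV'])]
  simp_rw [Finset.mul_sum]
  rw [Finset.sum_comm]
  have h2 : ∀ f ∈ T, (∑ V' ∈ W.powerset,
      (-1:ℤ) ^ (W.card - V'.card) * (if Finset.univ.biUnion f ⊆ V' then (1:ℤ) else 0))
      = if Finset.univ.biUnion f = W then 1 else 0 := by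
    intro f hf
    have hU : Finset.univ.biUnion f ⊆ W := by
      rw [Finset.biUnion_subset]
      intro t _
      rw [hTdef, Fintype.mem_piFinset] at hf
      exact Finset.mem_powerset.mp (Finset.mem_filter.mp (hf t)).1
    rw [← aux_sum W _ hU, Finset.sum_filter]
    exact Finset.sum_congr rfl fun V' _ => by rw [mul_ite, mul_one, mul_zero]
  rw [Finset.sum_congr rfl h2, Finset.sum_boole]
  have h3 : T.filter (fun f => Finset.univ.biUnion f = W)
      = Finset.univ.filter (fun f : Fin k → Finset V =>
          (∀ t, ∀ u ∈ f t, ∀ v ∈ f t, ¬ G.Adj u v) ∧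
          (∀ t, f t ⊆ W) ∧
          Finset.univ.biUnion f = W ∧
          ∀ s ∈ S', ∀ t, f t ∩ G.neighborFinset s ≠ ∅) := by
    ext f
    simp only [hTdef, hQdef, Finset.mem_filter, Fintype.mem_piFinset, Finset.mem_powerset,
      Finset.mem_univ, true_and]
    constructor
    · rintro ⟨h4, h5⟩
      exact ⟨fun t => (h4 t).2.1, fun t => (h4 t).1, h5, fun s hs t => (h4 t).2.2 s hs⟩
    · rintro ⟨h4, h5, h6, h7⟩
      exact ⟨fun t => ⟨h5 t, h4 t, fun s hs => h7 s hs t⟩, h6⟩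
  rw [h3]
  rw [Nat.card_eq_fintype_card, Fintype.card_subtype]
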